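/- The run-length sequence of every infinite paperfolding sequence is overlap-free: it contains no factor of the form a·x·a·x·a where a is a single symbol and x is a possibly empty word. -/

import Mathlib

/-- Paperfolding word; instructions are given with the most recent (last) instruction first. -/
def foldAux : List ℤ → List ℤ
  | [] => []
  | a :: f => foldAux f ++ a :: (foldAux f).reverse.map (fun x => -x)

/-- `paper f` is the finite paperfolding word `P_f` for instructions `f = [f_0, f_1, …]`,
satisfying `P_ε = ε` and `P_{f·a} = P_f · a · (-P_f^R)`. -/
def paper (f : List ℤ) : List ℤ := foldAux f.reverse

/-- The sequence of lengths of the maximal runs (maximal blocks of equal symbols) of `w`. -/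
def runLengths (w : List ℤ) : List ℕ := (w.splitBy (fun a b => a == b)).map List.length

/-- `p` (indexed from 1) is the infinite paperfolding sequence with instructions `f`,
i.e. every finite paperfolding word of a prefix of `f` is a prefix of `p`. -/
def IsLimit (f : ℕ → ℤ) (p : ℕ → ℤ) : Prop :=
  ∀ m k, k < (paper ((List.range m).map f)).length →
    p (k + 1) = (paper ((List.range m).map f)).getD k 0

/-- `E` enumerates, in increasing order (`E 1 < E 2 < ⋯`, with the convention `E 0 = 0`),
the ending positions of the maximal runs of the sequence `p` (indexed from 1):
position `m ≥ 1` ends a run iff `p m ≠ p (m+1)`. -/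
def IsRunEnds (p : ℕ → ℤ) (E : ℕ → ℕ) : Prop :=
  E 0 = 0 ∧ StrictMono E ∧ ∀ m, 1 ≤ m → ((∃ n, 1 ≤ n ∧ E n = m) ↔ p m ≠ p (m + 1))


lemma foldAux_length (l : List ℤ) : (foldAux l).length = 2^l.length - 1 := by
  induction l with
  | nil => simp [foldAux]
  | cons a f ih =>
    simp [foldAux, ih, List.length_append]
    have : 1 ≤ 2^f.length := Nat.one_le_two_pow
    simp [pow_succ]
    omega

lemma paper_length (f : ℕ → ℤ) (m : ℕ) :
    (paper ((List.range m).map f)).length = 2^m - 1 := by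
  unfold paper; rw [foldAux_length]; simp

lemma paper_succ (f : ℕ → ℤ) (m : ℕ) :
    paper ((List.range (m+1)).map f) = paper ((List.range m).map f) ++ f m ::
      ((paper ((List.range m).map f)).reverse.map (fun x => -x)) := by
  unfold paper
  rw [List.range_succ, List.map_append]
  simp [foldAux]

lemma two_adic_exists (m : ℕ) (hm : 1 ≤ m) : ∃ a k, m = 2^a*(2*k+1) := by
  induction m using Nat.strong_induction_on with
  | _ m ih =>
    rcases Nat.even_or_odd m with he | ho
    · obtain ⟨t, ht⟩ := he
      have ht1 : 1 ≤ t := by omega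
      obtain ⟨a, k, h⟩ := ih t (by omega) ht1
      refine ⟨a+1, k, ?_⟩
      rw [pow_succ]
      rw [show (2:ℕ)^a*2*(2*k+1) = 2^a*(2*k+1) + 2^a*(2*k+1) by ring, ← h]
      omega
    · obtain ⟨t, ht⟩ := ho
      exact ⟨0, t, by simpa [mul_comm] using ht⟩

lemma two_adic_unique : ∀ a b k l : ℕ, 2^a*(2*k+1) = 2^b*(2*l+1) → a = b ∧ k = l := by
  intro a
  induction a with
  | zero =>
    intro b k l h
    cases b with
    | zero => simp at h; omega
    | succ b =>
      exfalso
      rw [show (2:ℕ)^(b+1)*(2*l+1) = 2*(2^b*(2*l+1)) by ring] at h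
      simp at h; omega
  | succ a ih =>
    intro b k l h
    cases b with
    | zero =>
      exfalso
      rw [show (2:ℕ)^(a+1)*(2*k+1) = 2*(2^a*(2*k+1)) by ring] at h
      simp at h; omega
    | succ b =>
      rw [show (2:ℕ)^(a+1)*(2*k+1) = 2*(2^a*(2*k+1)) by ring,
          show (2:ℕ)^(b+1)*(2*l+1) = 2*(2^b*(2*l+1)) by ring] at h
      have h2 := Nat.eq_of_mul_eq_mul_left (show 0 < 2 by norm_num) h
      obtain ⟨h3, h4⟩ := ih b k l h2
      exact ⟨by omega, h4⟩

lemma paper_getD (f : ℕ → ℤ) : ∀ m a k : ℕ, 2^a*(2*k+1) ≤ 2^m - 1 →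
    (paper ((List.range m).map f)).getD (2^a*(2*k+1) - 1) 0 = (-1)^k * f a := by
  intro m
  induction m with
  | zero =>
    intro a k h
    exfalso
    have h1 : 1 ≤ 2^a*(2*k+1) := Nat.one_le_iff_ne_zero.2 (by positivity)
    norm_num at h
  | succ m ih =>
    intro a k h
    set pos := 2^a*(2*k+1) with hposdef
    have hpos1 : 1 ≤ pos := Nat.one_le_iff_ne_zero.2 (by positivity)
    have h2m : 1 ≤ 2^m := Nat.one_le_two_pow
    have hm1 : 2^(m+1) = 2^m + 2^m := by rw [pow_succ]; ring
    have hlen := paper_length f m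
    rw [paper_succ]
    rcases lt_trichotomy pos (2^m) with hlt | heq | hgt
    · rw [List.getD_append _ _ _ _ (by omega)]
      exact ih a k (by omega)
    · obtain ⟨ha, hk⟩ := two_adic_unique a m k 0 (by rw [← hposdef, heq]; ring)
      have hidx0 : pos - 1 - (paper ((List.range m).map f)).length = 0 := by omega
      rw [List.getD_append_right _ _ _ _ (by omega), hidx0]
      simp [ha, hk]
    · -- right (mirrored) part
      have ham : a < m := by
        by_contra hcon
        push_neg at hcon
        have hma : 2^m ≤ 2^a := Nat.pow_le_pow_right (by norm_num) hcon
        rcases Nat.eq_zero_or_pos k with hk0 | hk1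
        · have hple : pos = 2^a := by rw [hposdef, hk0]; ring
          rcases Nat.lt_or_ge a (m+1) with h7 | h7
          · have h8 : a = m := by omega
            rw [h8] at hple
            omega
          · have : 2^(m+1) ≤ 2^a := Nat.pow_le_pow_right (by norm_num) h7
            omega
        · have h9 : 2^a * 3 ≤ pos := by
            rw [hposdef]
            exact Nat.mul_le_mul_left _ (by omega)
          omega
      have hk2 : k + 1 ≤ 2^(m-a) := by
        by_contra hcon
        push_neg at hcon
        have h4 : 2^(m-a) * 2 ≤ 2*k+1 := by omega
        have h5 : 2^a * (2^(m-a)*2) ≤ 2^a*(2*k+1) := Nat.mul_le_mul_left _ h4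
        have h6 : 2^a * (2^(m-a)*2) = 2^(m+1) := by
          rw [show (2:ℕ)^a * (2^(m-a)*2) = (2^a * 2^(m-a))*2 by ring, ← pow_add]
          rw [show a + (m-a) = m by omega, pow_succ]
        rw [h6, ← hposdef] at h5
        omega
      set k' := 2^(m-a) - (k+1) with hk'def
      have hpos' : 2^(m+1) - pos = 2^a*(2*k'+1) := by
        have h10 : 2^a*(2*k'+1) + pos = 2^(m+1) := by
          rw [hposdef, show 2^a*(2*k'+1) + 2^a*(2*k+1) = 2^a*(2*(k'+k+1)) by ring]
          rw [show 2*(k'+k+1) = 2*2^(m-a) by omega]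
          rw [show (2:ℕ)^a*(2*2^(m-a)) = 2*(2^a*2^(m-a)) by ring, ← pow_add,
            show a + (m-a) = m by omega]
          rw [pow_succ]; ring
        omega
      have hidx : pos - 1 - (paper ((List.range m).map f)).length = (pos - 2^m - 1) + 1 := by omega
      rw [List.getD_append_right _ _ _ _ (by omega), hidx]
      rw [List.getD_cons_succ]
      have hidx2 : pos - 2^m - 1 < (paper ((List.range m).map f)).length := by omega
      have hrevlen : pos - 2^m - 1 < ((paper ((List.range m).map f)).reverse.map (fun x => -x)).length := by
        simpa using hidx2
      rw [List.getD_eq_getElem _ _ hrevlen]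
      rw [List.getElem_map]
      rw [List.getElem_reverse]
      have hidx3 : (paper ((List.range m).map f)).length - 1 - (pos - 2^m - 1) = 2^a*(2*k'+1) - 1 := by
        omega
      rw [← List.getD_eq_getElem _ (0:ℤ), hidx3]
      rw [ih a k' (by omega)]
      have hpar : (-1 : ℤ)^k' = (-1)^(k+1) := by
        have hke : k' + (k+1) = 2^(m-a) := by omega
        have hev : Even (2^(m-a)) := by
          rcases Nat.exists_eq_succ_of_ne_zero (show m - a ≠ 0 by omega) with ⟨j, hj⟩
          exact ⟨2^j, by rw [hj, pow_succ]; ring⟩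
        have h11 : (-1:ℤ)^(k' + (k+1)) = 1 := by
          rw [hke]; exact hev.neg_one_pow
        rw [pow_add] at h11
        have h12 : ((-1:ℤ)^(k+1)) * ((-1)^(k+1)) = 1 := by
          rw [← pow_add]; exact (Even.add_self _).neg_one_pow
        calc (-1 : ℤ)^k' = (-1)^k' * (((-1:ℤ)^(k+1)) * ((-1)^(k+1))) := by rw [h12]; ring
          _ = ((-1:ℤ)^k' * ((-1)^(k+1))) * ((-1)^(k+1)) := by ring
          _ = (-1)^(k+1) := by rw [h11]; ring
      rw [hpar, pow_succ]
      ring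

section PV
variable {f p : ℕ → ℤ}

lemma p_val (hp : IsLimit f p) (a k : ℕ) : p (2^a*(2*k+1)) = (-1)^k * f a := by
  have hk : k < 2^k := Nat.lt_two_pow_self
  have hb : 2^a*(2*k+1) ≤ 2^(a+k+1) - 1 := by
    have h1 : 2*k+1+1 ≤ 2^(k+1) := by rw [pow_succ]; omega
    have h2 : 2^a*(2*k+1+1) ≤ 2^a*2^(k+1) := Nat.mul_le_mul_left _ h1
    rw [← pow_add, show a + (k+1) = a + k + 1 by omega] at h2
    have h3 : 1 ≤ 2^a := Nat.one_le_two_pow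
    have h4 : 2^a*(2*k+1+1) = 2^a*(2*k+1) + 2^a := by ring
    omega
  have hpos : 1 ≤ 2^a*(2*k+1) := Nat.one_le_iff_ne_zero.2 (by positivity)
  have h5 := hp (a+k+1) (2^a*(2*k+1) - 1)
    (by rw [paper_length]; have : 1 ≤ 2^(a+k+1) := Nat.one_le_two_pow; omega)
  rw [show 2^a*(2*k+1) - 1 + 1 = 2^a*(2*k+1) by omega] at h5
  rw [h5, paper_getD f (a+k+1) a k hb]

lemma p_odd (hp : IsLimit f p) (t : ℕ) : p (2*t+1) = (-1)^t * f 0 := by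
  have := p_val hp 0 t
  norm_num at this
  exact this

lemma p_pm (hf : ∀ n, f n = -1 ∨ f n = 1) (hp : IsLimit f p) (m : ℕ) (hm : 1 ≤ m) :
    p m = 1 ∨ p m = -1 := by
  obtain ⟨a, k, rfl⟩ := two_adic_exists m hm
  rw [p_val hp]
  rcases hf a with h | h <;>
  rcases Nat.even_or_odd k with h2 | h2 <;>
  rw [h] <;> first
    | (rw [h2.neg_one_pow]; norm_num)
    | (rw [Odd.neg_one_pow h2]; norm_num)

lemma pair_lemma (hf : ∀ n, f n = -1 ∨ f n = 1) (hp : IsLimit f p) (t : ℕ) :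
    (p (2*t+1) ≠ p (2*t+2)) ↔ (p (2*t+2) = p (2*t+3)) := by
  have h3 : p (2*t+3) = - p (2*t+1) := by
    have e1 := p_odd hp t
    have e2 := p_odd hp (t+1)
    rw [show 2*(t+1)+1 = 2*t+3 by ring] at e2
    rw [e1, e2, pow_succ]
    ring
  rcases p_pm hf hp (2*t+1) (by omega) with h1 | h1 <;>
  rcases p_pm hf hp (2*t+2) (by omega) with h2 | h2 <;>
  rw [h3, h1, h2] <;> norm_num

end PV

section CORE

lemma neg_one_pow_pm (t : ℕ) : (-1:ℤ)^t = 1 ∨ (-1:ℤ)^t = -1 := by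
  rcases Nat.even_or_odd t with h | h
  · left; exact h.neg_one_pow
  · right; exact h.neg_one_pow

lemma core_even : ∀ K : ℕ, ∀ w eps : ℕ → ℤ, (∀ a, eps a ≠ 0) →
    (∀ a k, w (2^a*(2*k+1)) = (-1)^k * eps a) →
    ∀ A, 1 ≤ A → K % 2 = 0 → 2 ≤ K →
    ¬ (∀ j, A ≤ j → j ≤ A + K - 1 → w j = w (j + K)) := by
  intro K
  induction K using Nat.strong_induction_on with
  | _ K ihK =>
    intro w eps heps hw A hA hK2 hK H
    rcases Nat.even_or_odd (K/2) with hs | hs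
    · -- K ≡ 0 mod 4
      obtain ⟨u, hu⟩ := hs
      set s := K/2 with hsdef
      refine ihK s (by omega) (fun l => w (2*l)) (fun a => eps (a+1))
        (fun a => heps (a+1)) ?_ ((A+1)/2) (by omega) (by omega) (by omega) ?_
      · intro a k
        show w (2*(2^a*(2*k+1))) = (-1)^k * eps (a+1)
        rw [show 2*(2^a*(2*k+1)) = 2^(a+1)*(2*k+1) by ring]
        exact hw (a+1) k
      · intro l hl1 hl2
        show w (2*l) = w (2*(l+s))
        have h1 := H (2*l) (by omega) (by omega)
        rw [show 2*l + K = 2*(l+s) by omega] at h1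
        exact h1
    · -- K ≡ 2 mod 4
      obtain ⟨s, hsodd⟩ := hs    -- K/2 = 2*s+1
      rcases Nat.even_or_odd A with hAe | hAo
      · -- A even, use m = A+1 = 2t+1 with t = A/2
        obtain ⟨t, ht⟩ := hAe
        have h1 := H (A+1) (by omega) (by omega)
        have e1 := hw 0 t
        have e2 := hw 0 (t+(2*s+1))
        norm_num at e1 e2
        rw [show 2*t+1 = A+1 by omega] at e1
        rw [show 2*(t+(2*s+1))+1 = A+1+K by omega] at e2
        rw [e1, e2, pow_add] at h1
        have h9 : (-1:ℤ)^(2*s+1) = -1 := Odd.neg_one_pow ⟨s, by ring⟩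
        rw [h9] at h1
        rcases neg_one_pow_pm t with h10 | h10 <;> rw [h10] at h1 <;>
          exact heps 0 (by linarith)
      · obtain ⟨t, ht⟩ := hAo
        have h1 := H A (by omega) (by omega)
        have e1 := hw 0 t
        have e2 := hw 0 (t+(2*s+1))
        norm_num at e1 e2
        rw [show 2*t+1 = A by omega] at e1
        rw [show 2*(t+(2*s+1))+1 = A+K by omega] at e2
        rw [e1, e2, pow_add] at h1
        have h9 : (-1:ℤ)^(2*s+1) = -1 := Odd.neg_one_pow ⟨s, by ring⟩
        rw [h9] at h1
        rcases neg_one_pow_pm t with h10 | h10 <;> rw [h10] at h1 <;>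
          exact heps 0 (by linarith)

lemma core_main : ∀ n, 1 ≤ n → ∀ w eps : ℕ → ℤ, (∀ a, eps a ≠ 0) →
    (∀ a k, w (2^a*(2*k+1)) = (-1)^k * eps a) →
    ∀ A, A % 2 = 1 →
    ¬ (∀ j, A ≤ j → j ≤ A + n → w j = w (j + n)) := by
  intro n hn w eps heps hw A hA H
  rcases Nat.even_or_odd n with hne | hno
  · obtain ⟨u, hu⟩ := hne
    exact core_even n w eps heps hw A (by omega) (by omega) (by omega)
      (fun j hj1 hj2 => H j hj1 (by omega))
  · obtain ⟨s, hsodd⟩ := hno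
    have h1 := H A le_rfl (by omega)
    have h2 := H (A+n) (by omega) le_rfl
    obtain ⟨t, ht⟩ : ∃ t, A = 2*t+1 := ⟨A/2, by omega⟩
    have e1 := hw 0 t
    have e2 := hw 0 (t+n)
    norm_num at e1 e2
    rw [show 2*t+1 = A by omega] at e1
    rw [show 2*(t+n)+1 = A+n+n by omega] at e2
    have h3 : w A = w (A+n+n) := by rw [h1, h2, add_assoc]
    rw [e1, e2, pow_add] at h3
    have h9 : (-1:ℤ)^n = -1 := Odd.neg_one_pow ⟨s, by omega⟩
    rw [h9] at h3
    rcases neg_one_pow_pm t with h10 | h10 <;> rw [h10] at h3 <;>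
      exact heps 0 (by linarith)

end CORE

lemma E_bounds {f p : ℕ → ℤ} {E : ℕ → ℕ} (hf : ∀ n, f n = -1 ∨ f n = 1)
    (hp : IsLimit f p) (hE : IsRunEnds p E) : ∀ n, 2*n - 1 ≤ E n ∧ E n ≤ 2*n := by
  obtain ⟨hE0, hEmono, hEiff⟩ := hE
  intro n
  induction n with
  | zero => simp [hE0]
  | succ n ih =>
    obtain ⟨ihl, ihu⟩ := ih
    have hmono1 : E n < E (n+1) := hEmono (by omega)
    constructor
    · rcases Nat.eq_zero_or_pos n with h0 | h1
      · subst h0; omega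
      · by_contra hcon
        push_neg at hcon
        have hEn : E n = 2*n-1 := by omega
        have hEn1 : E (n+1) = 2*n := by omega
        have hb1 : p (2*n-1) ≠ p (2*n-1+1) :=
          (hEiff (2*n-1) (by omega)).1 ⟨n, by omega, hEn⟩
        have hb2 : p (2*n) ≠ p (2*n+1) :=
          (hEiff (2*n) (by omega)).1 ⟨n+1, by omega, hEn1⟩
        have hpl := pair_lemma hf hp (n-1)
        rw [show 2*(n-1)+1 = 2*n-1 by omega, show 2*(n-1)+2 = 2*n by omega,
            show 2*(n-1)+3 = 2*n+1 by omega] at hpl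
        rw [show 2*n-1+1 = 2*n by omega] at hb1
        exact hb2 (hpl.1 hb1)
    · have hpl := pair_lemma hf hp n
      have hex : p (2*n+1) ≠ p (2*n+2) ∨ p (2*n+2) ≠ p (2*n+3) := by tauto
      rcases hex with hb | hb
      · obtain ⟨j, hj1, hj2⟩ := (hEiff (2*n+1) (by omega)).2
          (by rw [show 2*n+1+1 = 2*n+2 by omega]; exact hb)
        have hj3 : n+1 ≤ j := by
          by_contra hc; push_neg at hc
          have : E j ≤ E n := hEmono.monotone (by omega)
          omega
        have := hEmono.monotone hj3
        omega
      · obtain ⟨j, hj1, hj2⟩ := (hEiff (2*n+2) (by omega)).2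
          (by rw [show 2*n+2+1 = 2*n+3 by omega]; exact hb)
        have hj3 : n+1 ≤ j := by
          by_contra hc; push_neg at hc
          have : E j ≤ E n := hEmono.monotone (by omega)
          omega
        have := hEmono.monotone hj3
        omega

lemma E_eq_iff {f p : ℕ → ℤ} {E : ℕ → ℕ} (hf : ∀ n, f n = -1 ∨ f n = 1)
    (hp : IsLimit f p) (hE : IsRunEnds p E) (n : ℕ) (hn : 1 ≤ n) :
    E n = 2*n ↔ p (2*n) ≠ p (2*n+1) := by
  have hb := E_bounds hf hp hE
  obtain ⟨hE0, hEmono, hEiff⟩ := hE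
  constructor
  · intro h
    have := (hEiff (2*n) (by omega)).1 ⟨n, hn, h⟩
    rwa [show 2*n+1 = 2*n+1 by rfl] at this
  · intro h
    obtain ⟨j, hj1, hj2⟩ := (hEiff (2*n) (by omega)).2 h
    have b1 := hb j
    have b2 := hb n
    have : j = n := by omega
    subst this
    exact hj2

theorem runSeq_overlapFree (f p : ℕ → ℤ) (E : ℕ → ℕ)
    (hf : ∀ n, f n = -1 ∨ f n = 1) (hp : IsLimit f p) (hE : IsRunEnds p E) :
    ¬ ∃ i n : ℕ, 1 ≤ i ∧ 1 ≤ n ∧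
      ∀ t ≤ n, E (i + t) - E (i + t - 1) = E (i + n + t) - E (i + n + t - 1) := by
  rintro ⟨i, n, hi, hn, hyp⟩
  obtain ⟨hE0, hEmono, hEiff⟩ := id hE
  have hb := E_bounds hf hp hE
  set χ : ℕ → ℤ := fun j => (E j : ℤ) - (2*j - 1) with hχ
  have hχ01 : ∀ j, χ j = 0 ∨ χ j = 1 := by
    intro j
    have h1 := hb j
    rcases Nat.eq_zero_or_pos j with h0 | h0
    · subst h0; right; simp [hχ, hE0]
    · simp only [hχ]; omega
  set γ : ℕ → ℤ := fun t => χ (i-1+t) with hγ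
  have step' : ∀ t, t ≤ n → γ (t+1) - γ t = γ (n+t+1) - γ (n+t) := by
    intro t ht
    have h1 := hyp t ht
    have e2 : i + t - 1 = i-1+t := by omega
    have e4 : i + n + t - 1 = i-1+(n+t) := by omega
    have e1 : i + t = i-1+(t+1) := by omega
    have e3 : i + n + t = i-1+(n+t+1) := by omega
    rw [e2, e4, e1, e3] at h1
    have m1 : E (i-1+t) ≤ E (i-1+(t+1)) := hEmono.monotone (by omega)
    have m2 : E (i-1+(n+t)) ≤ E (i-1+(n+t+1)) := hEmono.monotone (by omega)
    simp only [hγ, hχ]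
    omega
  have key : ∀ t, t ≤ n+1 → γ t - γ (n+t) = γ 0 - γ n := by
    intro t
    induction t with
    | zero => intro _; simp
    | succ t iht =>
      intro ht
      have h1 := step' t (by omega)
      have h2 := iht (by omega)
      rw [show n+(t+1) = n+t+1 by omega]
      linarith
  have g01 : ∀ t, γ t = 0 ∨ γ t = 1 := fun t => hχ01 (i-1+t)
  have hd0 : γ 0 - γ n = 0 := by
    have k1 := key n (by omega)
    rcases g01 0 with a1 | a1 <;> rcases g01 n with a2 | a2 <;>
      rcases g01 (n+n) with a3 | a3 <;> omega
  have hper : ∀ t, t ≤ n+1 → γ t = γ (n+t) := by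
    intro t ht
    have := key t ht
    omega
  -- translate to w
  have hwval : ∀ a k, p (2*(2^a*(2*k+1))) * p (2*(2^a*(2*k+1))+1) =
      (-1)^k * ((if a = 0 then (-1:ℤ) else 1) * (f (a+1) * f 0)) := by
    intro a k
    have hpe : p (2*(2^a*(2*k+1))) = (-1)^k * f (a+1) := by
      rw [show 2*(2^a*(2*k+1)) = 2^(a+1)*(2*k+1) by ring]
      exact p_val hp (a+1) k
    have hpo := p_odd hp (2^a*(2*k+1))
    rcases Nat.eq_zero_or_pos a with ha | ha
    · subst ha
      norm_num at hpe hpo ⊢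
      rw [hpe, hpo]
      rw [(odd_two_mul_add_one k).neg_one_pow]
      ring
    · obtain ⟨a', rfl⟩ : ∃ a', a = a'+1 := ⟨a-1, by omega⟩
      have hev : Even (2^(a'+1)*(2*k+1)) := ⟨2^a'*(2*k+1), by rw [pow_succ]; ring⟩
      rw [hev.neg_one_pow] at hpo
      rw [hpe, hpo, if_neg (by omega)]
      ring
  have heps : ∀ a, (if a = 0 then (-1:ℤ) else 1) * (f (a+1) * f 0) ≠ 0 := by
    intro a
    rcases hf (a+1) with h1 | h1 <;> rcases hf 0 with h2 | h2 <;>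
      rw [h1, h2] <;> split <;> norm_num
  set A := if i % 2 = 1 then i else i - 1 with hA
  have hAodd : A % 2 = 1 := by
    rcases Nat.even_or_odd i with h | h
    · obtain ⟨u, hu⟩ := h
      rw [hA, if_neg (by omega)]
      omega
    · obtain ⟨u, hu⟩ := h
      rw [hA, if_pos (by omega)]
      omega
  have hA1 : i - 1 ≤ A ∧ A ≤ i ∧ 1 ≤ A := by
    rcases Nat.even_or_odd i with h | h
    · obtain ⟨u, hu⟩ := h
      rw [hA, if_neg (by omega)]; omega
    · obtain ⟨u, hu⟩ := h
      rw [hA, if_pos (by omega)]; omega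
  refine core_main n hn (fun j => p (2*j) * p (2*j+1))
    (fun a => (if a = 0 then (-1:ℤ) else 1) * (f (a+1) * f 0))
    (fun a => heps a) (fun a k => hwval a k) A hAodd ?_
  intro j hj1 hj2
  have hj0 : 1 ≤ j := by omega
  have hc : χ j = χ (j+n) := by
    have h := hper (j-(i-1)) (by omega)
    simp only [hγ] at h
    rw [show i-1+(j-(i-1)) = j by omega, show i-1+(n+(j-(i-1))) = j+n by omega] at h
    exact h
  have b1 := hb j
  have b2 := hb (j+n)
  have hiff1 : χ j = 1 ↔ E j = 2*j := by simp only [hχ]; omega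
  have hiff2 : χ (j+n) = 1 ↔ E (j+n) = 2*(j+n) := by simp only [hχ]; omega
  have e1 := E_eq_iff hf hp hE j hj0
  have e2 := E_eq_iff hf hp hE (j+n) (by omega)
  have hne : (p (2*j) ≠ p (2*j+1)) ↔ (p (2*(j+n)) ≠ p (2*(j+n)+1)) := by
    rw [← e1, ← e2, ← hiff1, ← hiff2, hc]
  show p (2*j) * p (2*j+1) = p (2*(j+n)) * p (2*(j+n)+1)
  rcases p_pm hf hp (2*j) (by omega) with q1 | q1 <;>
    rcases p_pm hf hp (2*j+1) (by omega) with q2 | q2 <;>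
    rcases p_pm hf hp (2*(j+n)) (by omega) with q3 | q3 <;>
    rcases p_pm hf hp (2*(j+n)+1) (by omega) with q4 | q4 <;>
    rw [q1, q2, q3, q4] at hne ⊢ <;> norm_num at hne <;> norm_num
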